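/- Let Q(t) = q_0 + q_s t^s + q_r t^r be a trinomial with 0 < s < r, r > 2, all of q_0, q_s, q_r odd, such that Q mod 2 is primitive over ℤ/2 (i.e., t has multiplicative order 2^r − 1 in (ℤ/2)[t]/(Q)). Then Q(t) does not satisfy Condition S. -/

import Mathlib

open Polynomial

lemma aux8 (x y : ℤ) (hx : Odd x) (hy : Odd y) :
    (4 : ZMod 8) * ((x : ZMod 8) * (y : ZMod 8)) ≠ 0 := by
  obtain ⟨k, hk⟩ := hx.mul hy
  have h1 : (x : ZMod 8) * (y : ZMod 8) = 2 * (k : ZMod 8) + 1 := by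
    rw [← Int.cast_mul, hk]; push_cast; ring
  rw [h1]
  have h2 : (4 : ZMod 8) * (2 * (k : ZMod 8) + 1) = 8 * k + 4 := by ring
  rw [h2, show (8 : ZMod 8) = 0 from rfl]
  simp
  decide


/-- Condition S: `Q(t)² + Q(−t)² ≡ 2·q_r·Q(t²) (mod 8)` where `q_r` is the leading
coefficient of `Q`. -/
def conditionS (Q : Polynomial ℤ) : Prop :=
  (Q ^ 2 + (Q.comp (-X)) ^ 2).map (Int.castRingHom (ZMod 8)) =
    (C (2 * Q.leadingCoeff) * Q.comp (X ^ 2)).map (Int.castRingHom (ZMod 8))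

theorem stmt16 (q0 qs qr : ℤ) (s r : ℕ) (hs : 0 < s) (hsr : s < r) (hr2 : 2 < r)
    (h0 : Odd q0) (hqs : Odd qs) (hqr : Odd qr)
    (Q : Polynomial ℤ) (hQ : Q = C q0 + C qs * X ^ s + C qr * X ^ r)
    (hprim : orderOf (Ideal.Quotient.mk
      (Ideal.span {Q.map (Int.castRingHom (ZMod 2))}) (X : Polynomial (ZMod 2))) =
        2 ^ r - 1) :
    ¬ conditionS Q := by
  intro hS
  -- leading coefficient
  have hr0 : r ≠ 0 := by omega
  have hrs : r ≠ s := by omega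
  have hqr0 : qr ≠ 0 := by rintro rfl; exact (Int.not_odd_iff_even.mpr Even.zero) hqr
  have hcoeff : Q.coeff r = qr := by
    subst hQ
    simp only [coeff_add, coeff_C_mul, coeff_X_pow, coeff_C, if_neg hr0, if_neg hrs,
      if_pos rfl]
    simp
  have hlead : Q.leadingCoeff = qr := by
    have hle : Q.natDegree ≤ r := by
      rw [hQ]; compute_degree; all_goals omega
    have hge : r ≤ Q.natDegree := le_natDegree_of_ne_zero (by rw [hcoeff]; exact hqr0)
    rw [leadingCoeff, show Q.natDegree = r by omega, hcoeff]
  -- move to ZMod 8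
  set a : ZMod 8 := (q0 : ZMod 8) with ha
  set b : ZMod 8 := (qs : ZMod 8) with hb
  set c : ZMod 8 := (qr : ZMod 8) with hc
  set P : Polynomial (ZMod 8) := Q.map (Int.castRingHom (ZMod 8)) with hPdef
  have hP : P = C a + C b * X ^ s + C c * X ^ r := by
    rw [hPdef, hQ]
    simp [Polynomial.map_add, Polynomial.map_mul, Polynomial.map_pow,
      Polynomial.C_eq_intCast, ha, hb, hc]
  have h' : P ^ 2 + (P.comp (-X)) ^ 2 = C (2 * c) * P.comp (X ^ 2) := by
    have := hS
    unfold conditionS at this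
    rw [hlead] at this
    rw [C_mul, hc, Polynomial.C_eq_intCast, map_ofNat C 2, hPdef]
    simpa [Polynomial.map_add, Polynomial.map_pow, Polynomial.map_comp,
      Polynomial.map_neg, Polynomial.map_mul] using this
  set e : ZMod 8 := (-1) ^ s with he
  set f : ZMod 8 := (-1) ^ r with hf
  have hCe : ((-1 : Polynomial (ZMod 8))) ^ s = C e := by
    rw [he, C_pow]; simp
  have hCf : ((-1 : Polynomial (ZMod 8))) ^ r = C f := by
    rw [hf, C_pow]; simp
  have hPneg : P.comp (-X) = C a + C b * C e * X ^ s + C c * C f * X ^ r := by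
    rw [hP]
    simp only [add_comp, mul_comp, C_comp, pow_comp, X_comp, neg_pow, hCe, hCf]
    ring
  have hPsq : P.comp (X ^ 2) = C a + C b * X ^ (2 * s) + C c * X ^ (2 * r) := by
    rw [hP]
    simp only [add_comp, mul_comp, C_comp, pow_comp, X_comp, ← pow_mul]
  have hL : P ^ 2 + (P.comp (-X)) ^ 2 =
      C (2 * a ^ 2) + C (a * b * (2 + 2 * e)) * X ^ s + C (a * c * (2 + 2 * f)) * X ^ r
      + C (b ^ 2 * (1 + e ^ 2)) * X ^ (2 * s) + C (c ^ 2 * (1 + f ^ 2)) * X ^ (2 * r)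
      + C (b * c * (2 + 2 * (e * f))) * X ^ (s + r) := by
    rw [hPneg, hP]
    simp only [map_add, map_mul, map_pow, map_one, map_ofNat]
    ring
  have hR : C (2 * c) * P.comp (X ^ 2) =
      C (2 * (c * a)) + C (2 * (c * b)) * X ^ (2 * s) + C (2 * (c * c)) * X ^ (2 * r) := by
    rw [hPsq]
    simp only [map_mul, map_ofNat]
    ring
  rw [hL, hR] at h'
  -- step A : s odd
  have hsodd : Odd s := by
    by_contra hcon
    have hse : Even s := Nat.not_odd_iff_even.mp hcon
    have he1 : e = 1 := by rw [he]; exact hse.neg_one_pow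
    have hcs := congrArg (fun p => p.coeff s) h'
    have c1 : ¬ (s = 0) := by omega
    have c2 : ¬ (s = r) := by omega
    have c3 : ¬ (s = 2 * s) := by omega
    have c4 : ¬ (s = 2 * r) := by omega
    have c5 : ¬ (s = s + r) := by omega
    simp only [coeff_add, coeff_C_mul, coeff_X_pow, coeff_C, if_neg c1, if_neg c2,
      if_neg c3, if_neg c4, if_neg c5, if_pos rfl, eq_self_iff_true, if_true, mul_one, mul_zero, add_zero,
      zero_add] at hcs
    rw [he1] at hcs
    have : (4 : ZMod 8) * (a * b) = 0 := by linear_combination hcs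
    exact aux8 q0 qs h0 hqs this
  -- step B/C : r = 2 * s
  have hr2s : r = 2 * s := by
    by_contra hne
    rcases Nat.even_or_odd r with hre | hro
    · -- r even, r ≠ 2s : coefficient at r
      have hf1 : f = 1 := by rw [hf]; exact hre.neg_one_pow
      have hcs := congrArg (fun p => p.coeff r) h'
      have c1 : ¬ (r = 0) := by omega
      have c2 : ¬ (r = s) := by omega
      have c3 : ¬ (r = 2 * s) := hne
      have c4 : ¬ (r = 2 * r) := by omega
      have c5 : ¬ (r = s + r) := by omega
      simp only [coeff_add, coeff_C_mul, coeff_X_pow, coeff_C, if_neg c1, if_neg c2,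
        if_neg c3, if_neg c4, if_neg c5, if_pos rfl, eq_self_iff_true, if_true, mul_one, mul_zero, add_zero,
        zero_add] at hcs
      rw [hf1] at hcs
      have : (4 : ZMod 8) * (a * c) = 0 := by linear_combination hcs
      exact aux8 q0 qr h0 hqr this
    · -- r odd : coefficient at s + r
      have he1 : e = -1 := by rw [he]; exact hsodd.neg_one_pow
      have hf1 : f = -1 := by rw [hf]; exact hro.neg_one_pow
      have hcs := congrArg (fun p => p.coeff (s + r)) h'
      have c1 : ¬ (s + r = 0) := by omega
      have c2 : ¬ (s + r = s) := by omega
      have c3 : ¬ (s + r = r) := by omega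
      have c4 : ¬ (s + r = 2 * s) := by omega
      have c5 : ¬ (s + r = 2 * r) := by omega
      simp only [coeff_add, coeff_C_mul, coeff_X_pow, coeff_C, if_neg c1, if_neg c2,
        if_neg c3, if_neg c4, if_neg c5, if_pos rfl, eq_self_iff_true, if_true, mul_one, mul_zero, add_zero,
        zero_add] at hcs
      rw [he1, hf1] at hcs
      have : (4 : ZMod 8) * (b * c) = 0 := by linear_combination hcs
      exact aux8 qs qr hqs hqr this
  -- final: primitivity contradiction
  have hcast1 : ∀ x : ℤ, Odd x → (x : ZMod 2) = 1 := by
    intro x hx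
    obtain ⟨k, rfl⟩ := hx
    push_cast
    rw [show (2 : ZMod 2) = 0 from rfl]
    ring
  have hq2 : Q.map (Int.castRingHom (ZMod 2)) = 1 + X ^ s + X ^ (2 * s) := by
    rw [hQ, hr2s]
    simp only [Polynomial.map_add, Polynomial.map_mul, Polynomial.map_pow, map_C, map_X]
    rw [show (Int.castRingHom (ZMod 2)) q0 = 1 from hcast1 q0 h0,
      show (Int.castRingHom (ZMod 2)) qs = 1 from hcast1 qs hqs,
      show (Int.castRingHom (ZMod 2)) qr = 1 from hcast1 qr hqr]
    simp
  set I : Ideal (Polynomial (ZMod 2)) :=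
    Ideal.span {Q.map (Int.castRingHom (ZMod 2))} with hI
  have key : (Ideal.Quotient.mk I (X : Polynomial (ZMod 2))) ^ (3 * s) = 1 := by
    rw [← map_pow, ← map_one (Ideal.Quotient.mk I), Ideal.Quotient.eq]
    refine Ideal.mem_span_singleton.mpr ⟨X ^ s - 1, ?_⟩
    rw [hq2]; ring
  have hdvd : orderOf (Ideal.Quotient.mk I (X : Polynomial (ZMod 2))) ∣ 3 * s :=
    orderOf_dvd_of_pow_eq_one key
  rw [hprim] at hdvd
  have hle2 : 2 ^ r - 1 ≤ 3 * s := Nat.le_of_dvd (by omega) hdvd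
  have h1le : 1 ≤ 2 ^ r := Nat.one_le_two_pow
  have hpow : s < 2 ^ s := Nat.lt_two_pow_self
  have hrr : 2 ^ r = 2 ^ s * 2 ^ s := by rw [hr2s, two_mul, pow_add]
  have hs2 : 2 ≤ s := by omega
  have hmul : (s + 1) * (s + 1) ≤ 2 ^ s * 2 ^ s := Nat.mul_le_mul hpow hpow
  have h3 : 2 ^ r ≤ 3 * s + 1 := by omega
  rw [hrr] at h3
  have h4 : (s + 1) * (s + 1) ≤ 3 * s + 1 := hmul.trans h3
  nlinarith [hs2]
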